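/- Let A be a bounded self-adjoint operator on a complex Hilbert space H whose real spectrum is a disjoint union σ ∪ Σ, and let d > 0 satisfy d ≤ |x − y| for all x ∈ σ and y ∈ Σ. Assume in addition that the convex hull of σ is disjoint from Σ, or the convex hull of Σ is disjoint from σ. Let V be a non-negative bounded operator on H, and let Q be an orthogonal projection on H (self-adjoint and idempotent) that commutes with A + V. Then sin(2·arcsin(‖E_A(σ) − Q‖)) ≤ ‖V‖/d. -/

import Mathlib

set_option maxHeartbeats 1000000

open ContinuousLinearMap Real

/-- The spectral projection of a bounded (self-adjoint) operator `T` associated with a set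
`Δ ⊆ ℝ`, defined via the real continuous functional calculus applied to the indicator
function of `Δ`. -/
noncomputable def specProj {H : Type*} [NormedAddCommGroup H] [InnerProductSpace ℂ H]
    [CompleteSpace H] (T : H →L[ℂ] H) (Δ : Set ℝ) : H →L[ℂ] H :=
  cfc (Set.indicator Δ fun _ => (1 : ℝ)) T

section Aux

variable {H : Type*} [NormedAddCommGroup H] [InnerProductSpace ℂ H] [CompleteSpace H]


lemma proj_inner_zero {P : H →L[ℂ] H} (hP : IsSelfAdjoint P) (hP2 : P * P = P)
    (x y : H) : @inner ℂ H _ (P x) ((1 - P) y) = 0 := by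
  have hadj : ContinuousLinearMap.adjoint P = P := by rw [← star_eq_adjoint, hP.star_eq]
  have h := adjoint_inner_left P ((1 - P) y) x
  rw [hadj] at h
  rw [h]
  have : P ((1 - P) y) = (P * (1 - P)) y := rfl
  rw [this, mul_sub, mul_one, hP2, sub_self]
  simp

lemma pythagoras {P : H →L[ℂ] H} (hP : IsSelfAdjoint P) (hP2 : P * P = P) (x : H) :
    ‖P x‖ ^ 2 + ‖(1 - P) x‖ ^ 2 = ‖x‖ ^ 2 := by
  have h := norm_add_sq_eq_norm_sq_add_norm_sq_of_inner_eq_zero _ _ (proj_inner_zero hP hP2 x x)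
  have hx : P x + (1 - P) x = x := by simp
  rw [hx] at h
  ring_nf; ring_nf at h; linarith

lemma block_norm_le {P T S : H →L[ℂ] H} (hP : IsSelfAdjoint P) (hP2 : P * P = P)
    {c : ℝ} (hc : 0 ≤ c) (hT : ‖P * T * (1 - P)‖ ≤ c) (hS : ‖(1 - P) * S * P‖ ≤ c) :
    ‖P * T * (1 - P) + (1 - P) * S * P‖ ≤ c := by
  refine opNorm_le_bound _ hc fun x => ?_
  have h1P2 : (1 - P) * (1 - P) = 1 - P := by
    rw [sub_mul, mul_sub, mul_sub, hP2, one_mul, mul_one]; abel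
  set u := (P * T * (1 - P)) x with hu
  set v := ((1 - P) * S * P) x with hv
  have huv : (P * T * (1 - P) + (1 - P) * S * P) x = u + v := rfl
  rw [huv]
  have hiuv : @inner ℂ H _ u v = 0 := proj_inner_zero hP hP2 _ _
  have hsq : ‖u + v‖ ^ 2 = ‖u‖ ^ 2 + ‖v‖ ^ 2 := by
    have := norm_add_sq_eq_norm_sq_add_norm_sq_of_inner_eq_zero u v hiuv
    ring_nf; ring_nf at this; linarith
  have hu' : ‖u‖ ≤ c * ‖(1 - P) x‖ := by
    have h2 : u = (P * T * (1 - P)) ((1 - P) x) := by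
      rw [hu]
      have h3 : (P * T * (1 - P)) ((1 - P) x) = (P * T * ((1 - P) * (1 - P))) x := by
        simp [mul_assoc]
      rw [h3, h1P2]
    rw [h2]
    exact (le_opNorm _ _).trans (by gcongr)
  have hv' : ‖v‖ ≤ c * ‖P x‖ := by
    have h2 : v = ((1 - P) * S * P) (P x) := by
      rw [hv]
      have h3 : ((1 - P) * S * P) (P x) = ((1 - P) * S * (P * P)) x := by
        simp [mul_assoc]
      rw [h3, hP2]
    rw [h2]
    exact (le_opNorm _ _).trans (by gcongr)
  have hpyth := pythagoras hP hP2 x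
  have h1 : ‖u + v‖ ^ 2 ≤ (c * ‖x‖) ^ 2 := by
    rw [hsq]
    nlinarith [pow_le_pow_left₀ (norm_nonneg u) hu' 2, pow_le_pow_left₀ (norm_nonneg v) hv' 2,
      hpyth, sq_nonneg c, sq_nonneg (c*‖x‖)]
  have h2 := Real.sqrt_le_sqrt h1
  rwa [Real.sqrt_sq (norm_nonneg _), Real.sqrt_sq (by positivity)] at h2

/-- norm of a projection is at most one; and of a difference of projections -/
lemma proj_norm_le_one {P : H →L[ℂ] H} (hP : IsSelfAdjoint P) (hP2 : P * P = P) : ‖P‖ ≤ 1 := by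
  refine opNorm_le_bound _ zero_le_one fun x => ?_
  have h := pythagoras hP hP2 x
  rw [one_mul]
  nlinarith [norm_nonneg (P x), norm_nonneg ((1-P) x), norm_nonneg x]


lemma selfadj_pyth_sum {D D' : H →L[ℂ] H} (hD : IsSelfAdjoint D) (hD' : IsSelfAdjoint D')
    (hsum : D * D + D' * D' = 1) (x : H) : ‖D x‖ ^ 2 + ‖D' x‖ ^ 2 = ‖x‖ ^ 2 := by
  have hadj : ContinuousLinearMap.adjoint D = D := by rw [← star_eq_adjoint, hD.star_eq]
  have hadj' : ContinuousLinearMap.adjoint D' = D' := by rw [← star_eq_adjoint, hD'.star_eq]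
  have h1 : @inner ℂ H _ x ((D * D) x) = (‖D x‖ : ℂ) ^ 2 := by
    have h := adjoint_inner_left D (D x) x
    rw [hadj] at h
    rw [show (D * D) x = D (D x) from rfl, ← h, inner_self_eq_norm_sq_to_K]; norm_cast
  have h2 : @inner ℂ H _ x ((D' * D') x) = (‖D' x‖ : ℂ) ^ 2 := by
    have h := adjoint_inner_left D' (D' x) x
    rw [hadj'] at h
    rw [show (D' * D') x = D' (D' x) from rfl, ← h, inner_self_eq_norm_sq_to_K]; norm_cast
  have h3 : (‖D x‖ : ℂ) ^ 2 + (‖D' x‖ : ℂ) ^ 2 = (‖x‖ : ℂ) ^ 2 := by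
    rw [← h1, ← h2, ← inner_add_right]
    rw [show (D * D) x + (D' * D') x = ((D * D + D' * D') : H →L[ℂ] H) x from rfl, hsum]
    rw [show ((1 : H →L[ℂ] H)) x = x from rfl, inner_self_eq_norm_sq_to_K]; norm_cast
  exact_mod_cast h3

lemma norm_proj_diff_le_one {P Q : H →L[ℂ] H} (hP : IsSelfAdjoint P) (hP2 : P * P = P)
    (hQ : IsSelfAdjoint Q) (hQ2 : Q * Q = Q) : ‖P - Q‖ ≤ 1 := by
  refine opNorm_le_bound _ zero_le_one fun x => ?_
  have hsum : (P - Q) * (P - Q) + (P + Q - 1) * (P + Q - 1) = 1 := by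
    have hP2' : ∀ X : H →L[ℂ] H, P * (P * X) = P * X := fun X => by rw [← mul_assoc, hP2]
    have hQ2' : ∀ X : H →L[ℂ] H, Q * (Q * X) = Q * X := fun X => by rw [← mul_assoc, hQ2]
    simp only [mul_sub, sub_mul, mul_add, add_mul, mul_one, one_mul, mul_assoc,
      hP2', hQ2', hP2, hQ2]
    abel
  have h := selfadj_pyth_sum (hP.sub hQ) ((hP.add hQ).sub (IsSelfAdjoint.one _)) hsum x
  rw [one_mul]
  nlinarith [norm_nonneg ((P - Q) x), norm_nonneg ((P + Q - 1) x), norm_nonneg x]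

lemma t_sqrt_le_norm_comm [Nontrivial H] {P Q : H →L[ℂ] H} (hP : IsSelfAdjoint P)
    (hP2 : P * P = P) (hQ : IsSelfAdjoint Q) (hQ2 : Q * Q = Q) :
    ‖P - Q‖ * Real.sqrt (1 - ‖P - Q‖ ^ 2) ≤ ‖P * Q - Q * P‖ := by
  set t := ‖P - Q‖ with htdef
  set D := P - Q with hDdef
  set K := P * Q - Q * P with hKdef
  have hD : IsSelfAdjoint D := hP.sub hQ
  have hDD : ‖D * D‖ = t ^ 2 := by
    rw [show D * D = star D * D by rw [hD.star_eq], CStarRing.norm_star_mul_self,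
      htdef, hDdef]
    ring
  have hpos : (0 : H →L[ℂ] H) ≤ D * D := by
    have := star_mul_self_nonneg D
    rwa [hD.star_eq] at this
  have hmem : t ^ 2 ∈ spectrum ℝ (D * D) :=
    hDD ▸ CStarAlgebra.norm_mem_spectrum_of_nonneg hpos
  have hcfc : cfc (fun s : ℝ => s - s * s) (D * D) = D * D - (D * D) * (D * D) := by
    rw [cfc_sub _ _ (D * D), cfc_mul _ _ (D * D), cfc_id' (R := ℝ) (D * D)]
  have hfs : (t ^ 2 - t ^ 2 * t ^ 2) ∈ spectrum ℝ (D * D - (D * D) * (D * D)) := by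
    rw [← hcfc]
    rw [cfc_map_spectrum (fun s : ℝ => s - s * s) (D * D)]
    exact ⟨t ^ 2, hmem, rfl⟩
  have hid : D * D - (D * D) * (D * D) = -(K * K) := by
    rw [hDdef, hKdef]
    have hP2' : ∀ X : H →L[ℂ] H, P * (P * X) = P * X := fun X => by rw [← mul_assoc, hP2]
    have hQ2' : ∀ X : H →L[ℂ] H, Q * (Q * X) = Q * X := fun X => by rw [← mul_assoc, hQ2]
    simp only [mul_sub, sub_mul, mul_add, add_mul, mul_one, one_mul, neg_sub, mul_assoc,
      hP2', hQ2', hP2, hQ2]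
    abel
  have hKK : ‖-(K * K)‖ = ‖K‖ ^ 2 := by
    have hKstar : star K = -K := by
      rw [hKdef]
      simp [star_sub, star_mul, hP.star_eq, hQ.star_eq]
    have : ‖K‖ * ‖K‖ = ‖star K * K‖ := (CStarRing.norm_star_mul_self).symm
    rw [hKstar, neg_mul] at this
    rw [← this]; ring
  have hle : t ^ 2 - t ^ 2 * t ^ 2 ≤ ‖K‖ ^ 2 := by
    have := spectrum.norm_le_norm_of_mem (hid ▸ hfs)
    rw [hKK] at this
    calc t ^ 2 - t ^ 2 * t ^ 2 ≤ |t ^ 2 - t ^ 2 * t ^ 2| := le_abs_self _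
    _ ≤ ‖K‖ ^ 2 := by rwa [Real.norm_eq_abs] at this
  have ht0 : 0 ≤ t := norm_nonneg _
  have key : t * Real.sqrt (1 - t ^ 2) = Real.sqrt (t ^ 2 - t ^ 2 * t ^ 2) := by
    rw [show t ^ 2 - t ^ 2 * t ^ 2 = t ^ 2 * (1 - t ^ 2) by ring, Real.sqrt_mul (sq_nonneg t),
      Real.sqrt_sq ht0]
  rw [key]
  calc Real.sqrt (t ^ 2 - t ^ 2 * t ^ 2) ≤ Real.sqrt (‖K‖ ^ 2) := Real.sqrt_le_sqrt hle
  _ = ‖K‖ := Real.sqrt_sq (norm_nonneg _)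


lemma indicator_continuousOn {σ τ : Set ℝ} {d : ℝ} (hd : 0 < d)
    (hdist : ∀ x ∈ σ, ∀ y ∈ τ, d ≤ |x - y|) (f : ℝ → ℝ)
    (hf : ∀ y ∈ τ, ContinuousAt f y) :
    ContinuousOn (Set.indicator τ f) (σ ∪ τ) := by
  intro x hx
  rcases hx with hxσ | hxτ
  · have hxτ' : x ∉ τ := fun hτ => by
      have := hdist x hxσ x hτ; simp at this; linarith
    have hev : Set.indicator τ f =ᶠ[nhdsWithin x (σ ∪ τ)] fun _ => 0 := by
      filter_upwards [inter_mem_nhdsWithin (σ ∪ τ) (Metric.ball_mem_nhds x hd)] with z hz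
      have hzτ : z ∉ τ := by
        intro hzτ
        have h1 := hdist x hxσ z hzτ
        have h2 := hz.2
        rw [Metric.mem_ball, Real.dist_eq] at h2
        rw [abs_sub_comm] at h1
        linarith
      exact Set.indicator_of_notMem hzτ f
    exact (continuousWithinAt_const (b := (0:ℝ))).congr_of_eventuallyEq hev
      (Set.indicator_of_notMem hxτ' f)
  · have hev : Set.indicator τ f =ᶠ[nhdsWithin x (σ ∪ τ)] f := by
      filter_upwards [inter_mem_nhdsWithin (σ ∪ τ) (Metric.ball_mem_nhds x hd)] with z hz
      have hzτ : z ∈ τ := by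
        rcases hz.1 with h | h
        · exfalso
          have h1 := hdist z h x hxτ
          have h2 := hz.2
          rw [Metric.mem_ball, Real.dist_eq] at h2
          linarith
        · exact h
      exact Set.indicator_of_mem hzτ f
    exact ((hf x hxτ).continuousWithinAt).congr_of_eventuallyEq hev
      (Set.indicator_of_mem hxτ f)

lemma sylvester_bound (A X : H →L[ℂ] H) (hA : IsSelfAdjoint A)
    (σ τ : Set ℝ) (hspec : spectrum ℝ A = σ ∪ τ)
    (d : ℝ) (hd : 0 < d) (hdist : ∀ x ∈ σ, ∀ y ∈ τ, d ≤ |x - y|)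
    (hconv : Disjoint (convexHull ℝ σ) τ) :
    ‖specProj A σ * X * (1 - specProj A σ)‖ ≤ ‖A * X - X * A‖ / d := by
  rcases Set.eq_empty_or_nonempty σ with hσe | hσne
  · rw [show specProj A σ = 0 by
      rw [specProj, hσe, Set.indicator_empty]
      exact cfc_zero ℝ A]
    simp only [zero_mul]
    rw [norm_zero]
    positivity
  -- geometry
  have hdist' : ∀ y ∈ τ, ∀ x ∈ σ, d ≤ |y - x| := fun y hy x hx => by
    rw [abs_sub_comm]; exact hdist x hx y hy
  have hσsub : σ ⊆ spectrum ℝ A := hspec ▸ Set.subset_union_left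
  have hσcl : IsClosed σ := by
    rw [← isSeqClosed_iff_isClosed]
    intro u z hu huz
    have hz : z ∈ spectrum ℝ A := (spectrum.isClosed (𝕜 := ℝ) A).isSeqClosed
      (fun n => hσsub (hu n)) huz
    rw [hspec] at hz
    rcases hz with hz | hz
    · exact hz
    · exfalso
      obtain ⟨N, hN⟩ := Metric.tendsto_atTop.mp huz d hd
      have h1 := hN N le_rfl
      have h2 := hdist (u N) (hu N) z hz
      rw [Real.dist_eq] at h1
      linarith
  have hσcomp : IsCompact σ := (spectrum.isCompact (𝕜 := ℝ) A).of_isClosed_subset hσcl hσsub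
  set a := sInf σ with hadef
  set b := sSup σ with hbdef
  have ha : a ∈ σ := hσcomp.sInf_mem hσne
  have hb : b ∈ σ := hσcomp.sSup_mem hσne
  have hax : ∀ x ∈ σ, a ≤ x := fun x hx => csInf_le hσcomp.bddBelow hx
  have hxb : ∀ x ∈ σ, x ≤ b := fun x hx => le_csSup hσcomp.bddAbove hx
  have hab : a ≤ b := hxb a ha
  set m := (a + b) / 2 with hmdef
  set r := (b - a) / 2 with hrdef
  have hr0 : (0:ℝ) ≤ r := by rw [hrdef]; linarith
  have hrd : (0:ℝ) < r + d := by linarith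
  have hσr : ∀ x ∈ σ, |x - m| ≤ r := fun x hx => by
    rw [abs_le]
    constructor <;> [linarith [hax x hx]; linarith [hxb x hx]]
  have hτr : ∀ y ∈ τ, r + d ≤ |y - m| := by
    intro y hy
    have hyh : y ∉ convexHull ℝ σ := Set.disjoint_right.mp hconv hy
    have hseg : Set.Icc a b ⊆ convexHull ℝ σ := by
      rw [← segment_eq_Icc hab]
      exact (convex_convexHull ℝ σ).segment_subset (subset_convexHull ℝ σ ha)
        (subset_convexHull ℝ σ hb)
    have hyIcc : y ∉ Set.Icc a b := fun h => hyh (hseg h)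
    rw [Set.mem_Icc, not_and_or, not_le, not_le] at hyIcc
    rcases hyIcc with hlt | hlt
    · have h1 := hdist a ha y hy
      rw [abs_of_nonneg (by linarith)] at h1
      rw [abs_of_nonpos (by rw [hmdef]; linarith), hmdef]
      linarith
    · have h1 := hdist b hb y hy
      rw [abs_of_nonpos (by linarith)] at h1
      rw [abs_of_nonneg (by rw [hmdef]; linarith), hmdef]
      linarith
  have hτm : ∀ y ∈ τ, y - m ≠ 0 := fun y hy h0 => by
    have := hτr y hy; rw [h0] at this; simp at this; linarith
  -- functions
  set fσ : ℝ → ℝ := Set.indicator σ (fun _ => (1:ℝ)) with hfσdef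
  set fτ : ℝ → ℝ := Set.indicator τ (fun _ => (1:ℝ)) with hfτdef
  set g : ℝ → ℝ := Set.indicator τ (fun x => (x - m)⁻¹) with hgdef
  have hc_fσ : ContinuousOn fσ (spectrum ℝ A) := by
    rw [hspec, Set.union_comm]
    exact indicator_continuousOn hd hdist' _ (fun y _ => continuousAt_const)
  have hc_fτ : ContinuousOn fτ (spectrum ℝ A) := by
    rw [hspec]
    exact indicator_continuousOn hd hdist _ (fun y _ => continuousAt_const)
  have hc_g : ContinuousOn g (spectrum ℝ A) := by
    rw [hspec]
    exact indicator_continuousOn hd hdist _ (fun y hy =>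
      ((continuousAt_id.sub continuousAt_const).inv₀ (hτm y hy)))
  have hc_sub : ContinuousOn (fun x : ℝ => x - m) (spectrum ℝ A) :=
    (continuous_id.sub continuous_const).continuousOn
  have hc_id : ContinuousOn (fun x : ℝ => x) (spectrum ℝ A) := continuous_id.continuousOn
  have hστ : ∀ x, x ∈ σ → x ∉ τ := fun x hx hxt => by
    have := hdist x hx x hxt; simp at this; linarith
  -- operators
  set P := specProj A σ with hPdef
  set Pτ := cfc fτ A with hPτdef
  set G := cfc g A with hGdef
  have hPcfc : P = cfc fσ A := rfl
  have hPP : P * P = P := by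
    rw [hPcfc, ← cfc_mul fσ fσ A hc_fσ hc_fσ]
    refine cfc_congr fun x _ => ?_
    by_cases hx : x ∈ σ <;> simp [hfσdef, Set.indicator, hx]
  have h1P : 1 - P = Pτ := by
    have : P + Pτ = 1 := by
      rw [hPcfc, hPτdef, ← cfc_add (a := A) fσ fτ hc_fσ hc_fτ]
      rw [← cfc_one (R := ℝ) A]
      refine cfc_congr fun x hx => ?_
      rw [hspec] at hx
      rcases hx with hx | hx
      · simp [hfσdef, hfτdef, Set.indicator, hx, hστ x hx]
      · have hxσ : x ∉ σ := fun hxσ => hστ x hxσ hx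
        simp [hfσdef, hfτdef, Set.indicator, hx, hxσ]
    rw [← this]; abel
  have hP_norm : ‖P‖ ≤ 1 := by
    rw [hPcfc]
    refine norm_cfc_le zero_le_one fun x _ => ?_
    by_cases hx : x ∈ σ <;> simp [hfσdef, Set.indicator, hx]
  have hPτ_norm : ‖Pτ‖ ≤ 1 := by
    rw [hPτdef]
    refine norm_cfc_le zero_le_one fun x _ => ?_
    by_cases hx : x ∈ τ <;> simp [hfτdef, Set.indicator, hx]
  have hG_norm : ‖G‖ ≤ (r + d)⁻¹ := by
    rw [hGdef]
    refine norm_cfc_le (by positivity) fun x hx => ?_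
    by_cases hxτ : x ∈ τ
    · rw [hgdef]
      simp only [Set.indicator_of_mem hxτ]
      rw [Real.norm_eq_abs, abs_inv]
      exact inv_anti₀ hrd (hτr x hxτ)
    · rw [hgdef]
      simp only [Set.indicator_of_notMem hxτ]
      rw [norm_zero]
      positivity
  set N := (A - m • 1) * P with hNdef
  have hsub_cfc : A - m • 1 = cfc (fun x : ℝ => x - m) A := by
    rw [cfc_sub (fun x : ℝ => x) (fun _ => m) A hc_id continuousOn_const,
      cfc_id' (R := ℝ) A, cfc_const m A, Algebra.algebraMap_eq_smul_one]
  have hN_norm : ‖N‖ ≤ r := by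
    have : N = cfc (fun x => (x - m) * fσ x) A := by
      rw [hNdef, hsub_cfc, hPcfc, ← cfc_mul _ _ A hc_sub hc_fσ]
    rw [this]
    refine norm_cfc_le hr0 fun x hx => ?_
    by_cases hxσ : x ∈ σ
    · simp only [hfσdef, Set.indicator_of_mem hxσ, mul_one, Real.norm_eq_abs]
      exact hσr x hxσ
    · simp only [hfσdef, Set.indicator_of_notMem hxσ, mul_zero, norm_zero]
      exact hr0
  have hAP : A * P = P * A := by
    rw [hPcfc]
    have h1 := cfc_mul (fun x : ℝ => x) fσ A hc_id hc_fσ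
    have h2 := cfc_mul fσ (fun x : ℝ => x) A hc_fσ hc_id
    rw [cfc_id' (R := ℝ) A] at h1 h2
    rw [← h1, ← h2]
    exact cfc_congr fun x _ => mul_comm x (fσ x)
  have hkey : (A - m • 1) * (Pτ * G) = Pτ := by
    rw [hsub_cfc, hPτdef, hGdef, ← cfc_mul _ _ A hc_fτ hc_g,
      ← cfc_mul (fun x : ℝ => x - m) (fun x => fτ x * g x) A hc_sub (hc_fτ.mul hc_g)]
    refine cfc_congr fun x hx => ?_
    by_cases hxτ : x ∈ τ
    · simp only [hfτdef, hgdef, Set.indicator_of_mem hxτ, one_mul]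
      exact mul_inv_cancel₀ (hτm x hxτ)
    · simp [hfτdef, hgdef, Set.indicator_of_notMem hxτ]
  -- recursion
  set Y := P * X * (1 - P) with hYdef
  set C := P * (A * X - X * A) * (1 - P) with hCdef
  have hrec : Y = N * Y * G - C * G := by
    rw [hYdef, hCdef, h1P, hNdef]
    have hPP' : ∀ W : H →L[ℂ] H, P * (P * W) = P * W := fun W => by
      rw [← mul_assoc, hPP]
    have hAP' : ∀ W : H →L[ℂ] H, A * (P * W) = P * (A * W) := fun W => by
      rw [← mul_assoc, hAP, mul_assoc]
    have hkey' : A * (Pτ * G) = Pτ + m • (Pτ * G) := by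
      have := hkey
      rw [sub_mul, smul_mul_assoc, one_mul] at this
      exact sub_eq_iff_eq_add.mp this
    simp only [sub_mul, mul_sub, smul_mul_assoc, one_mul, mul_assoc, hPP', hAP', hkey',
      mul_add, add_mul, mul_smul_comm]
    abel
  have hY0 : 0 ≤ ‖C‖ / d := by positivity
  have hq0 : 0 ≤ r * (r + d)⁻¹ := by positivity
  have hq1 : r * (r + d)⁻¹ < 1 := by
    rw [mul_inv_lt_iff₀ hrd, one_mul]
    linarith
  have hstep : ‖Y‖ ≤ r * ‖Y‖ * (r + d)⁻¹ + ‖C‖ * (r + d)⁻¹ := by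
    calc ‖Y‖ = ‖N * Y * G - C * G‖ := by rw [← hrec]
    _ ≤ ‖N * Y * G‖ + ‖C * G‖ := norm_sub_le _ _
    _ ≤ ‖N‖ * ‖Y‖ * ‖G‖ + ‖C‖ * ‖G‖ := add_le_add
        ((norm_mul_le _ _).trans
          (mul_le_mul_of_nonneg_right (norm_mul_le _ _) (norm_nonneg _)))
        (norm_mul_le _ _)
    _ ≤ r * ‖Y‖ * (r + d)⁻¹ + ‖C‖ * (r + d)⁻¹ := by
        have hGpos : (0:ℝ) ≤ (r + d)⁻¹ := by positivity
        gcongr <;> first | exact hN_norm | exact hG_norm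
  have hind : ∀ n : ℕ, ‖Y‖ ≤ (r * (r + d)⁻¹) ^ n * ‖Y‖ + ‖C‖ / d := by
    intro n
    induction n with
    | zero => simpa using le_add_of_nonneg_right (a := ‖Y‖) hY0
    | succ n ih =>
      have hdne : d ≠ 0 := ne_of_gt hd
      have hrdne : r + d ≠ 0 := ne_of_gt hrd
      calc ‖Y‖ ≤ r * ‖Y‖ * (r + d)⁻¹ + ‖C‖ * (r + d)⁻¹ := hstep
      _ ≤ r * ((r * (r + d)⁻¹) ^ n * ‖Y‖ + ‖C‖ / d) * (r + d)⁻¹ + ‖C‖ * (r + d)⁻¹ := by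
          gcongr
      _ = (r * (r + d)⁻¹) ^ (n + 1) * ‖Y‖ + (r * (r + d)⁻¹ * d⁻¹ + (r + d)⁻¹) * ‖C‖ := by
          rw [div_eq_mul_inv]; ring
      _ = (r * (r + d)⁻¹) ^ (n + 1) * ‖Y‖ + ‖C‖ / d := by
          congr 1
          rw [div_eq_mul_inv, mul_comm]
          congr 1
          field_simp
  have htend : Filter.Tendsto (fun n : ℕ => (r * (r + d)⁻¹) ^ n * ‖Y‖ + ‖C‖ / d)
      Filter.atTop (nhds (0 * ‖Y‖ + ‖C‖ / d)) :=
    ((tendsto_pow_atTop_nhds_zero_of_lt_one hq0 hq1).mul_const _).add tendsto_const_nhds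
  have hfin : ‖Y‖ ≤ 0 * ‖Y‖ + ‖C‖ / d :=
    ge_of_tendsto htend (Filter.Eventually.of_forall hind)
  rw [zero_mul, zero_add] at hfin
  have hCle : ‖C‖ ≤ ‖A * X - X * A‖ := by
    rw [hCdef]
    have h1Pn : ‖(1:H →L[ℂ] H) - P‖ ≤ 1 := by rw [h1P]; exact hPτ_norm
    calc ‖P * (A * X - X * A) * (1 - P)‖
        ≤ ‖P * (A * X - X * A)‖ * ‖(1:H →L[ℂ] H) - P‖ := norm_mul_le _ _
    _ ≤ (‖P‖ * ‖A * X - X * A‖) * ‖(1:H →L[ℂ] H) - P‖ := by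
        gcongr
        exact norm_mul_le _ _
    _ ≤ (1 * ‖A * X - X * A‖) * 1 := by gcongr
    _ = ‖A * X - X * A‖ := by ring
  refine hfin.trans ?_
  gcongr

lemma sandwich_norm_le {R S Z : H →L[ℂ] H} (hR : ‖R‖ ≤ 1) (hS : ‖S‖ ≤ 1) :
    ‖R * Z * S‖ ≤ ‖Z‖ := by
  calc ‖R * Z * S‖ ≤ ‖R * Z‖ * ‖S‖ := norm_mul_le _ _
  _ ≤ (‖R‖ * ‖Z‖) * ‖S‖ := by gcongr; exact norm_mul_le _ _
  _ ≤ (1 * ‖Z‖) * 1 := by gcongr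
  _ = ‖Z‖ := by ring

end Aux

/-- the `sin 2θ` estimate for semidefinite perturbations, under the additional
geometric assumption that the convex hull of one spectral component is disjoint from the other:
`sin(2 arcsin ‖E_A(σ) - Q‖) ≤ ‖V‖/d`. -/
theorem sin_two_theta_semidefinite_convex
    {H : Type*} [NormedAddCommGroup H] [InnerProductSpace ℂ H] [CompleteSpace H]
    (A V Q : H →L[ℂ] H) (hA : IsSelfAdjoint A)
    (σ τ : Set ℝ) (hspec : spectrum ℝ A = σ ∪ τ) (hdisj : Disjoint σ τ)
    (d : ℝ) (hd : 0 < d) (hdist : ∀ x ∈ σ, ∀ y ∈ τ, d ≤ |x - y|)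
    (hconv : Disjoint (convexHull ℝ σ) τ ∨ Disjoint (convexHull ℝ τ) σ)
    (hV : 0 ≤ V) (hQ : IsSelfAdjoint Q) (hQ2 : Q ∘L Q = Q)
    (hcomm : Q ∘L (A + V) = (A + V) ∘L Q) :
    Real.sin (2 * Real.arcsin ‖specProj A σ - Q‖) ≤ ‖V‖ / d := by
  rcases subsingleton_or_nontrivial H with hsub | hnt
  · have h0 : specProj A σ - Q = 0 := Subsingleton.elim _ _
    rw [h0, norm_zero, Real.arcsin_zero, mul_zero, Real.sin_zero]
    positivity
  have hVsa : IsSelfAdjoint V := IsSelfAdjoint.of_nonneg hV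
  have hQ2' : Q * Q = Q := hQ2
  have hcomm' : Q * (A + V) = (A + V) * Q := hcomm
  have hdist' : ∀ y ∈ τ, ∀ x ∈ σ, d ≤ |y - x| := fun y hy x hx => by
    rw [abs_sub_comm]; exact hdist x hx y hy
  have hc_fσ : ContinuousOn (Set.indicator σ fun _ => (1:ℝ)) (spectrum ℝ A) := by
    rw [hspec, Set.union_comm]
    exact indicator_continuousOn hd hdist' _ (fun y _ => continuousAt_const)
  have hc_fτ : ContinuousOn (Set.indicator τ fun _ => (1:ℝ)) (spectrum ℝ A) := by
    rw [hspec]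
    exact indicator_continuousOn hd hdist _ (fun y _ => continuousAt_const)
  have hστ : ∀ x, x ∈ σ → x ∉ τ := fun x hx hxt => by
    have := hdist x hx x hxt; simp at this; linarith
  set P := specProj A σ with hPdef
  have hPsa : IsSelfAdjoint P := cfc_predicate _ A
  have hPP : P * P = P := by
    rw [hPdef, specProj, ← cfc_mul _ _ A hc_fσ hc_fσ]
    refine cfc_congr fun x _ => ?_
    by_cases hx : x ∈ σ <;> simp [Set.indicator, hx]
  -- [A,Q] = [Q,V] and its bound ‖A*Q - Q*A‖ ≤ ‖V‖/2
  have hAQ : A * Q - Q * A = Q * V - V * Q := by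
    rw [sub_eq_sub_iff_add_eq_add]
    have h := hcomm'
    rw [mul_add, add_mul] at h
    rw [show A * Q + V * Q = Q * A + Q * V from h.symm]
    abel
  set c := ‖V‖ / 2 with hcdef
  have hc0 : (0:ℝ) ≤ c := by positivity
  set V' := V - c • 1 with hV'def
  have hQV' : Q * V - V * Q = Q * V' - V' * Q := by
    rw [hV'def, mul_sub, sub_mul, mul_smul_comm, smul_mul_assoc, mul_one, one_mul]
    abel
  have hV'sa : IsSelfAdjoint V' := by
    refine hVsa.sub ?_
    exact IsSelfAdjoint.smul (star_trivial c) (IsSelfAdjoint.one _)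
  have hV'norm : ‖V'‖ ≤ c := by
    have hcfc : V' = cfc (fun x : ℝ => x - c) V := by
      rw [cfc_sub (fun x : ℝ => x) (fun _ => c) V continuous_id.continuousOn
        continuousOn_const, cfc_id' (R := ℝ) V, cfc_const c V,
        Algebra.algebraMap_eq_smul_one, hV'def]
    rw [hcfc]
    refine norm_cfc_le hc0 fun x hx => ?_
    have h0x : 0 ≤ x := spectrum_nonneg_of_nonneg hV hx
    have hxV : |x| ≤ ‖V‖ := by
      have := spectrum.norm_le_norm_of_mem hx
      rwa [Real.norm_eq_abs] at this
    rw [Real.norm_eq_abs, abs_le]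
    rw [abs_le] at hxV
    constructor <;> [linarith; linarith]
  have h1Qsa : IsSelfAdjoint ((1:H →L[ℂ] H) - Q) := (IsSelfAdjoint.one _).sub hQ
  have h1Q2 : ((1:H →L[ℂ] H) - Q) * (1 - Q) = 1 - Q := by
    rw [sub_mul, mul_sub, mul_sub, hQ2', one_mul, mul_one]; abel
  have hQn : ‖Q‖ ≤ 1 := proj_norm_le_one hQ hQ2'
  have h1Qn : ‖(1:H →L[ℂ] H) - Q‖ ≤ 1 := proj_norm_le_one h1Qsa h1Q2
  have hAQle : ‖A * Q - Q * A‖ ≤ c := by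
    rw [hAQ, hQV']
    have hdecomp : Q * V' - V' * Q = Q * V' * (1 - Q) + (1 - Q) * (-V') * Q := by
      noncomm_ring
    rw [hdecomp]
    refine block_norm_le hQ hQ2' hc0 ?_ ?_
    · exact (sandwich_norm_le hQn h1Qn).trans hV'norm
    · rw [show (1 - Q) * (-V') * Q = -((1-Q) * V' * Q) by noncomm_ring, norm_neg]
      exact (sandwich_norm_le h1Qn hQn).trans hV'norm
  -- the Sylvester bound in both convexity cases
  have hYle : ‖P * Q * (1 - P)‖ ≤ ‖A * Q - Q * A‖ / d := by
    rcases hconv with h | h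
    · exact sylvester_bound A Q hA σ τ hspec d hd hdist h
    · have h2 := sylvester_bound A Q hA τ σ (by rw [hspec, Set.union_comm]) d hd hdist' h
      have hPτ : specProj A τ = 1 - P := by
        have hsum : P + specProj A τ = 1 := by
          rw [hPdef, specProj, specProj, ← cfc_add (a := A) _ _ hc_fσ hc_fτ,
            ← cfc_one (R := ℝ) A]
          refine cfc_congr fun x hx => ?_
          rw [hspec] at hx
          rcases hx with hx | hx
          · simp [Set.indicator, hx, hστ x hx]
          · have hxσ : x ∉ σ := fun hxσ => hστ x hxσ hx
            simp [Set.indicator, hx, hxσ]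
        rw [← hsum]; abel
      rw [hPτ, sub_sub_cancel] at h2
      have hstar : star ((1 - P) * Q * P) = P * Q * (1 - P) := by
        simp only [star_mul, hPsa.star_eq, hQ.star_eq, star_sub, star_one]
        noncomm_ring
      calc ‖P * Q * (1 - P)‖ = ‖(1 - P) * Q * P‖ := by rw [← hstar, norm_star]
      _ ≤ ‖A * Q - Q * A‖ / d := h2
  -- commutator of the two projections
  have hKle : ‖P * Q - Q * P‖ ≤ ‖P * Q * (1 - P)‖ := by
    have hdecomp : P * Q - Q * P = P * Q * (1 - P) + (1 - P) * (-Q) * P := by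
      noncomm_ring
    rw [hdecomp]
    refine block_norm_le hPsa hPP (norm_nonneg _) le_rfl ?_
    rw [show (1 - P) * (-Q) * P = -((1-P) * Q * P) by noncomm_ring, norm_neg]
    have hstar : star (P * Q * (1 - P)) = (1 - P) * Q * P := by
      simp only [star_mul, hPsa.star_eq, hQ.star_eq, star_sub, star_one]
      noncomm_ring
    rw [← hstar, norm_star]
  -- spectral chain
  set t := ‖P - Q‖ with htdef
  have ht0 : 0 ≤ t := norm_nonneg _
  have ht1 : t ≤ 1 := norm_proj_diff_le_one hPsa hPP hQ hQ2'
  have hts : t * Real.sqrt (1 - t ^ 2) ≤ ‖P * Q - Q * P‖ :=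
    t_sqrt_le_norm_comm hPsa hPP hQ hQ2'
  rw [Real.sin_two_mul, Real.sin_arcsin (by linarith) ht1, Real.cos_arcsin]
  have hchain : t * Real.sqrt (1 - t ^ 2) ≤ c / d := by
    calc t * Real.sqrt (1 - t ^ 2) ≤ ‖P * Q - Q * P‖ := hts
    _ ≤ ‖P * Q * (1 - P)‖ := hKle
    _ ≤ ‖A * Q - Q * A‖ / d := hYle
    _ ≤ c / d := by gcongr
  have hfin : 2 * (c / d) = ‖V‖ / d := by rw [hcdef]; ring
  calc 2 * t * Real.sqrt (1 - t ^ 2) = 2 * (t * Real.sqrt (1 - t ^ 2)) := by ring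
  _ ≤ 2 * (c / d) := by linarith
  _ = ‖V‖ / d := hfin
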